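/- Removal of the first shrinking sequence preserves the shifted lattice condition: let w be a shifted lattice word and let d be the subword of w constructed greedily as follows: start at the rightmost occurrence of the maximum letter M of w; having selected an occurrence of value v > 1, next select the closest occurrence of v−1 to its right; stop at value 1. Then the word ŵ obtained from w by deleting the letters of d is also a shifted lattice word. -/

import Mathlib

def ShiftedLattice (w : List ℕ) : Prop :=
  ∀ s : List ℕ, s <:+ w → ∀ i : ℕ, 1 ≤ i →
    s.count (i + 1) ≤ s.count i ∧ s.count i ≤ s.count (i + 1) + 1

namespace List

def enum {α} (l : List α) : List (ℕ × α) := l.zipIdx.map Prod.swap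

theorem enum_length {α} (l : List α) : l.enum.length = l.length := by simp [enum]

theorem getElem_enum {α} (l : List α) (i : ℕ) (h : i < l.enum.length) :
    l.enum[i] = (i, l[i]'(by simpa [enum] using h)) := by
  simp [enum, getElem_zipIdx]

theorem enum_map_snd {α} (l : List α) : l.enum.map Prod.snd = l := by
  simp only [enum, map_map]
  exact zipIdx_map_fst 0 l

theorem enum_map_fst {α} (l : List α) : l.enum.map Prod.fst = range l.length := by
  simp only [enum, map_map]
  rw [range_eq_range']
  exact zipIdx_map_snd 0 l

end List

namespace RemoveShrinkAux

lemma countP_split {α} (p q : α → Bool) (l : List α) :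
    l.countP p = l.countP (fun a => p a && q a) + l.countP (fun a => p a && !q a) := by
  induction l with
  | nil => simp
  | cons a l ih =>
    simp only [List.countP_cons]
    cases hp : p a <;> cases hq : q a <;> simp [hp, hq] <;> omega

lemma suffix_eq_drop {α} {s m : List α} (h : s <:+ m) :
    s = m.drop (m.length - s.length) := by
  obtain ⟨r, rfl⟩ := h
  simp [List.drop_left]

lemma suffix_filter {α} (Q : α → Bool) :
    ∀ (l s : List α), s <:+ l.filter Q → ∃ t, t <:+ l ∧ s = t.filter Q := by
  intro l
  induction l with
  | nil => intro s hs; simp at hs; exact ⟨[], by simp [hs]⟩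
  | cons a l ih =>
    intro s hs
    by_cases hQ : Q a
    · rw [List.filter_cons_of_pos hQ] at hs
      rcases List.suffix_cons_iff.mp hs with h1 | h2
      · exact ⟨a :: l, List.suffix_refl _, by rw [h1, List.filter_cons_of_pos hQ]⟩
      · obtain ⟨t, ht, rfl⟩ := ih s h2
        exact ⟨t, ht.trans (List.suffix_cons a l), rfl⟩
    · rw [List.filter_cons_of_neg (by simpa using hQ)] at hs
      obtain ⟨t, ht, rfl⟩ := ih s hs
      exact ⟨t, ht.trans (List.suffix_cons a l), rfl⟩

end RemoveShrinkAux

open RemoveShrinkAux in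
theorem remove_shrinking_sequence_shiftedLattice (w : List ℕ)
    (hpos : ∀ x ∈ w, 1 ≤ x) (h : ShiftedLattice w)
    (M : ℕ) (hM : M ∈ w) (hmax : ∀ x ∈ w, x ≤ M)
    (idx : ℕ → ℕ)
    (hidxM : w[idx M]? = some M)
    (hMright : ∀ p : ℕ, w[p]? = some M → p ≤ idx M)
    (hstep : ∀ v : ℕ, 1 ≤ v → v < M →
      idx (v + 1) < idx v ∧ w[idx v]? = some v ∧
        ∀ q : ℕ, idx (v + 1) < q → q < idx v → w[q]? ≠ some v) :
    ShiftedLattice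
      ((((w.zipIdx.map Prod.swap).filter
        (fun x => decide (x.1 ∉ (Finset.Icc 1 M).image idx)))).map Prod.snd) := by
  classical
  show ShiftedLattice (((w.enum.filter
        (fun x => decide (x.1 ∉ (Finset.Icc 1 M).image idx)))).map Prod.snd)
  set n := w.length with hn
  set S := (Finset.Icc 1 M).image idx with hS
  set P : ℕ × ℕ → Bool := fun x => decide (x.1 ∉ S) with hP
  have hval : ∀ v, 1 ≤ v → v ≤ M → w[idx v]? = some v := by
    intro v h1 h2
    rcases eq_or_lt_of_le h2 with rfl | hlt
    · exact hidxM
    · exact (hstep v h1 hlt).2.1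
  have hdec : ∀ v, 1 ≤ v → v < M → idx (v + 1) < idx v := fun v h1 h2 => (hstep v h1 h2).1
  set a : ℕ → ℕ → ℕ := fun i p => (w.drop p).count i with ha
  have hlat : ∀ p j, 1 ≤ j → a (j+1) p ≤ a j p ∧ a j p ≤ a (j+1) p + 1 :=
    fun p j hj => h _ (List.drop_suffix p w) j hj
  have hanti : ∀ i p q, p ≤ q → a i q ≤ a i p := by
    intro i p q hpq
    have hd : w.drop q = (w.drop p).drop (q - p) := by
      rw [List.drop_drop]; congr 1; omega
    show (w.drop q).count i ≤ (w.drop p).count i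
    rw [hd]
    exact (List.drop_sublist _ _).count_le i
  have hseg : ∀ i p q, p ≤ q → (∀ j, p ≤ j → j < q → w[j]? ≠ some i) →
      a i p = a i q := by
    intro i p q hpq hno
    have hsplit : w.drop p = (w.drop p).take (q - p) ++ w.drop q := by
      conv_lhs => rw [← List.take_append_drop (q - p) (w.drop p)]
      rw [List.drop_drop]
      congr 2
      omega
    have hz : ((w.drop p).take (q - p)).count i = 0 := by
      rw [List.count_eq_zero]
      intro hmem
      obtain ⟨j, hj, hval'⟩ := List.mem_iff_getElem.mp hmem
      have hj' : j < q - p ∧ j < n - p := by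
        simpa [List.length_take, List.length_drop, Nat.lt_min] using hj
      simp only [List.getElem_take, List.getElem_drop] at hval'
      exact hno (p + j) (by omega) (by omega)
        (by simp [List.getElem?_eq_getElem (show p + j < n by omega), hval'])
    show (w.drop p).count i = (w.drop q).count i
    rw [hsplit, List.count_append, hz]
    omega
  have hone' : ∀ i p, w[p]? = some i → a i p = a i (p + 1) + 1 := by
    intro i p hx
    have hpn : p < n := by
      by_contra hc
      rw [List.getElem?_eq_none (by omega)] at hx
      simp at hx
    have hval' : w[p] = i := by
      rw [List.getElem?_eq_getElem hpn] at hx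
      exact Option.some.inj hx
    show (w.drop p).count i = (w.drop (p+1)).count i + 1
    rw [List.drop_eq_getElem_cons hpn, List.count_cons]
    simp [hval']
  have hkey : ∀ k p, 1 ≤ k → k ≤ M → (k = M ∨ idx (k + 1) < p) → p ≤ idx k →
      a (k+1) p + 1 ≤ a k p := by
    intro k p hk1 hkM hcase hpk
    rcases eq_or_lt_of_le hkM with rfl | hkltM
    · -- k = M
      have hz : a (k+1) p = 0 := by
        show (w.drop p).count (k+1) = 0
        rw [List.count_eq_zero]
        intro hmem
        have := hmax _ ((List.drop_sublist _ _).mem hmem)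
        omega
      have hpos' : 1 ≤ a k p := by
        have hkn : idx k < n := by
          by_contra hc
          rw [List.getElem?_eq_none (by omega)] at hidxM
          simp at hidxM
        have hmem : k ∈ w.drop p := by
          rw [List.mem_iff_getElem]
          refine ⟨idx k - p, by simp only [List.length_drop]; omega, ?_⟩
          simp only [List.getElem_drop]
          have hpi : p + (idx k - p) = idx k := by omega
          rw [List.getElem?_eq_getElem hkn] at hidxM
          simp [hpi, Option.some.inj hidxM]
        exact List.count_pos_iff.mpr hmem
      omega
    · -- k < M
      have hplt : idx (k + 1) < p := by
        rcases hcase with rfl | hplt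
        · omega
        · exact hplt
      have h1 : a (k+1) p ≤ a (k+1) (idx (k+1) + 1) := hanti _ _ _ (by omega)
      have h2 : a (k+1) (idx (k+1)) = a (k+1) (idx (k+1) + 1) + 1 :=
        hone' _ _ (hval (k+1) (by omega) (by omega))
      have h3 : a (k+1) (idx (k+1)) ≤ a k (idx (k+1)) := (hlat _ k hk1).1
      have h4 : a k (idx (k+1)) = a k (idx k) := by
        apply hseg k _ _ (le_of_lt (hdec k hk1 hkltM))
        intro j hj1 hj2 hj3
        rcases eq_or_lt_of_le hj1 with rfl | hjlt
        · rw [hval (k+1) (by omega) (by omega)] at hj3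
          exact absurd (Option.some.inj hj3) (by omega)
        · exact (hstep k hk1 hkltM).2.2 j hjlt hj2 hj3
      have h5 : a k p = a k (idx k) := by
        apply hseg k _ _ hpk
        intro j hj1 hj2 hj3
        exact (hstep k hk1 hkltM).2.2 j (by omega) hj2 hj3
      omega
  -- membership characterization for drop p (enum w)
  have hmemL : ∀ p (x : ℕ × ℕ), x ∈ (w.enum).drop p →
      p ≤ x.1 ∧ x.1 < n ∧ w[x.1]? = some x.2 := by
    intro p x hx
    obtain ⟨j, hj, hval'⟩ := List.mem_iff_getElem.mp hx
    have hpn : p + j < n := by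
      simp only [List.length_drop, List.enum_length] at hj
      omega
    simp only [List.getElem_drop, List.getElem_enum] at hval'
    refine ⟨?_, ?_, ?_⟩
    · rw [← hval']; omega
    · rw [← hval']; exact hpn
    · rw [← hval']
      exact List.getElem?_eq_getElem hpn
  -- count formula
  have hcount : ∀ p i, 1 ≤ i →
      ((((w.enum).drop p).filter P).map Prod.snd).count i
        + (if i ≤ M ∧ p ≤ idx i then 1 else 0) = a i p := by
    intro p i hi1
    have e1 : ((((w.enum).drop p).filter P).map Prod.snd).count i
        = ((w.enum).drop p).countP (fun x => (x.2 == i) && P x) := by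
      show (((((w.enum).drop p).filter P).map Prod.snd)).countP (· == i) = _
      rw [List.countP_map, List.countP_filter]
      rfl
    have e2 : a i p = ((w.enum).drop p).countP (fun x => x.2 == i) := by
      show (w.drop p).count i = _
      have hw : w.drop p = (((w.enum).drop p)).map Prod.snd := by
        rw [List.map_drop, List.enum_map_snd]
      rw [hw]
      show List.countP (· == i) _ = _
      rw [List.countP_map]
      rfl
    have e3 : ((w.enum).drop p).countP (fun x => x.2 == i)
        = ((w.enum).drop p).countP (fun x => (x.2 == i) && P x)
          + ((w.enum).drop p).countP (fun x => (x.2 == i) && !P x) :=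
      countP_split _ _ _
    have e4 : ((w.enum).drop p).countP (fun x => (x.2 == i) && !P x)
        = (if i ≤ M ∧ p ≤ idx i then 1 else 0) := by
      by_cases hcond : i ≤ M ∧ p ≤ idx i
      · rw [if_pos hcond]
        have hnodup : ((w.enum).drop p).Nodup := by
          have he : (w.enum).Nodup := by
            apply List.Nodup.of_map Prod.fst
            rw [List.enum_map_fst]
            exact List.nodup_range (n := n)
          exact List.Nodup.sublist (List.drop_sublist _ _) he
        have hidxn : idx i < n := by
          have hv := hval i hi1 hcond.1
          by_contra hc
          rw [List.getElem?_eq_none (by omega)] at hv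
          simp at hv
        have hw : w[idx i] = i := by
          have hv := hval i hi1 hcond.1
          rw [List.getElem?_eq_getElem hidxn] at hv
          exact Option.some.inj hv
        have hmem : ((idx i, i) : ℕ × ℕ) ∈ (w.enum).drop p := by
          rw [List.mem_iff_getElem]
          refine ⟨idx i - p, by simp only [List.length_drop, List.enum_length]; omega, ?_⟩
          simp only [List.getElem_drop, List.getElem_enum]
          have hpi : p + (idx i - p) = idx i := by omega
          simp [hpi, hw]
        have hcc : ((w.enum).drop p).countP (fun x => (x.2 == i) && !P x)
            = List.count ((idx i, i) : ℕ × ℕ) ((w.enum).drop p) := by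
          apply List.countP_congr
          intro x hx
          simp only [Bool.and_eq_true, beq_iff_eq, Bool.not_eq_true']
          constructor
          · rintro ⟨hxi, hxP⟩
            have hxS : x.1 ∈ S := by
              rw [hP] at hxP
              simpa using hxP
            rw [hS, Finset.mem_image] at hxS
            obtain ⟨v, hv, hvx⟩ := hxS
            rw [Finset.mem_Icc] at hv
            obtain ⟨hpx, hxn, hwx⟩ := hmemL p x hx
            have hvv : w[idx v]? = some v := hval v hv.1 hv.2
            rw [hvx, hwx, hxi] at hvv
            have hvi : v = i := (Option.some.inj hvv).symm
            have : x = (idx i, i) := by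
              ext
              · simp [← hvx, hvi]
              · simp [hxi]
            rw [this]
          · intro hx'
            have hx'' : x = (idx i, i) := by simpa using hx'
            subst hx''
            refine ⟨rfl, ?_⟩
            have hmemS : (idx i) ∈ S := by
              rw [hS, Finset.mem_image]
              exact ⟨i, Finset.mem_Icc.mpr ⟨hi1, hcond.1⟩, rfl⟩
            simp [hP, hmemS]
        rw [hcc]
        exact List.count_eq_one_of_mem hnodup hmem
      · rw [if_neg hcond]
        rw [List.countP_eq_zero]
        intro x hx hxsat
        simp only [Bool.and_eq_true, beq_iff_eq, Bool.not_eq_true'] at hxsat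
        obtain ⟨hxi, hxP⟩ := hxsat
        have hxS : x.1 ∈ S := by
          rw [hP] at hxP
          simpa using hxP
        rw [hS, Finset.mem_image] at hxS
        obtain ⟨v, hv, hvx⟩ := hxS
        rw [Finset.mem_Icc] at hv
        obtain ⟨hpx, hxn, hwx⟩ := hmemL p x hx
        have hvv : w[idx v]? = some v := hval v hv.1 hv.2
        rw [hvx, hwx, hxi] at hvv
        have hvi : v = i := (Option.some.inj hvv).symm
        exact hcond ⟨hvi ▸ hv.2, by rw [← hvi, hvx]; exact hpx⟩
    omega
  -- main argument
  intro s hs i hi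
  have h1 : s = ((w.enum.filter P).drop ((w.enum.filter P).length - s.length)).map Prod.snd := by
    have hd := suffix_eq_drop hs
    rw [← List.map_drop] at hd
    simpa [List.length_map] using hd
  obtain ⟨t, ht, htf⟩ := suffix_filter P w.enum _
    (List.drop_suffix ((w.enum.filter P).length - s.length) (w.enum.filter P))
  set p := w.enum.length - t.length with hp'
  have htd : t = (w.enum).drop p := suffix_eq_drop ht
  have hseq : s = (((w.enum).drop p).filter P).map Prod.snd := by
    rw [h1, htf, htd]
  rw [hseq]
  have e1 := hcount p i hi
  have e2 := hcount p (i+1) (by omega)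
  have hl := hlat p i hi
  by_cases h2 : i + 1 ≤ M ∧ p ≤ idx (i+1)
  · have hx1 : i ≤ M ∧ p ≤ idx i :=
      ⟨by omega, le_of_lt (lt_of_le_of_lt h2.2 (hdec i hi (by omega)))⟩
    rw [if_pos hx1] at e1; rw [if_pos h2] at e2
    omega
  · by_cases hx1 : i ≤ M ∧ p ≤ idx i
    · have hb : a (i+1) p + 1 ≤ a i p := by
        apply hkey i p hi hx1.1 _ hx1.2
        by_cases hiM : i = M
        · exact Or.inl hiM
        · right
          push_neg at h2
          exact h2 (by omega)
      rw [if_pos hx1] at e1; rw [if_neg h2] at e2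
      omega
    · rw [if_neg hx1] at e1; rw [if_neg h2] at e2
      omega
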